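/- Let Ω₀ ⊆ ℝ^d be open, let u : ℝ^d → ℝ be three times continuously differentiable and harmonic on Ω₀ (Δu = 0 on Ω₀), and let h : ℝ^d → ℝ^d be a twice continuously differentiable vector field. Then for every x ∈ Ω₀, div(y ↦ A_h(y) ∇u(y))(x) = Δ(y ↦ ⟨h(y), ∇u(y)⟩)(x). -/

import Mathlib

open scoped RealInnerProductSpace

noncomputable section

abbrev E (d : ℕ) := EuclideanSpace ℝ (Fin d)

/-- Divergence of a vector field: trace of its Jacobian (Fréchet derivative). -/
def vdiv {d : ℕ} (V : E d → E d) (x : E d) : ℝ :=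
  LinearMap.trace ℝ (E d) (fderiv ℝ V x).toLinearMap

/-- Laplacian `Δf = div(∇f)`. -/
def lap {d : ℕ} (f : E d → ℝ) (x : E d) : ℝ :=
  vdiv (fun y => gradient f y) x

/-- `A_h(x) = Dh(x) + Dh(x)ᵀ − (div h(x)) I`. -/
def Amat {d : ℕ} (h : E d → E d) (x : E d) : E d →L[ℝ] E d :=
  fderiv ℝ h x + ContinuousLinearMap.adjoint (fderiv ℝ h x) -
    vdiv h x • ContinuousLinearMap.id ℝ (E d)

/-! ### Auxiliary lemmas -/

def ee {d : ℕ} (i : Fin d) : E d := EuclideanSpace.single i 1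

lemma inner_ee {d : ℕ} (v : E d) (i : Fin d) : ⟪v, ee i⟫ = v i := by
  simp [ee, EuclideanSpace.inner_single_right]

lemma inner_coords {d : ℕ} (a b : E d) : ⟪a, b⟫ = ∑ i, a i * b i := by
  simp [PiLp.inner_apply, RCLike.inner_apply, mul_comm]

lemma expand_vec {d : ℕ} (w : E d) : w = ∑ j, w j • ee j := by
  ext k
  rw [WithLp.ofLp_sum, Finset.sum_apply]
  simp [ee, EuclideanSpace.single_apply, PiLp.smul_apply]

lemma trace_eq_sum {d : ℕ} (T : E d →L[ℝ] E d) :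
    LinearMap.trace ℝ (E d) T.toLinearMap = ∑ i, ⟪T (ee i), ee i⟫ := by
  classical
  rw [LinearMap.trace_eq_matrix_trace ℝ (EuclideanSpace.basisFun (Fin d) ℝ).toBasis, Matrix.trace]
  refine Finset.sum_congr rfl fun i _ => ?_
  simp [LinearMap.toMatrix_apply, Matrix.diag, inner_ee, ee, EuclideanSpace.inner_single_right]

lemma vdiv_eq_sum {d : ℕ} (V : E d → E d) (x : E d) (hV : DifferentiableAt ℝ V x) :
    vdiv V x = ∑ i, fderiv ℝ (fun y => ⟪V y, ee i⟫) x (ee i) := by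
  rw [vdiv, trace_eq_sum]
  refine Finset.sum_congr rfl fun i _ => ?_
  rw [fderiv_inner_apply ℝ hV (differentiableAt_const _)]
  simp

lemma fderiv_clm_apply_const {d : ℕ} {F : Type*} [NormedAddCommGroup F] [NormedSpace ℝ F]
    {C : E d → (E d →L[ℝ] F)} {x : E d}
    (hC : DifferentiableAt ℝ C x) (c v : E d) :
    fderiv ℝ (fun y => C y c) x v = fderiv ℝ C x v c := by
  rw [fderiv_clm_apply hC (differentiableAt_const c)]
  simp

lemma fderiv_inner_clm_const {d : ℕ} {C : E d → (E d →L[ℝ] E d)} {x : E d}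
    (hC : DifferentiableAt ℝ C x) (c c' v : E d) :
    fderiv ℝ (fun y => ⟪C y c, c'⟫) x v = ⟪fderiv ℝ C x v c, c'⟫ := by
  rw [fderiv_inner_apply ℝ (hC.clm_apply (differentiableAt_const c)) (differentiableAt_const c')]
  rw [fderiv_clm_apply_const hC c v]
  simp

set_option maxHeartbeats 2000000 in
theorem statement2 {d : ℕ} (Ω₀ : Set (E d)) (hΩ : IsOpen Ω₀)
    (u : E d → ℝ) (h : E d → E d)
    (hu : ContDiff ℝ 3 u) (hh : ContDiff ℝ 2 h)
    (harm : ∀ y ∈ Ω₀, lap u y = 0)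
    (x : E d) (hx : x ∈ Ω₀) :
    vdiv (fun y => Amat h y (gradient u y)) x =
      lap (fun y => ⟪h y, gradient u y⟫) x := by
  classical
  -- smoothness bookkeeping
  have hdu : ContDiff ℝ 2 (fderiv ℝ u) := hu.fderiv_right (by norm_num)
  have hgc : ContDiff ℝ 2 (gradient u) := by
    exact ((InnerProductSpace.toDual ℝ (E d)).symm.contDiff).comp hdu
  have hdh : ContDiff ℝ 1 (fderiv ℝ h) := hh.fderiv_right (by norm_num)
  have hdg : ContDiff ℝ 1 (fderiv ℝ (gradient u)) := hgc.fderiv_right (by norm_num)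
  have Hh : Differentiable ℝ h := hh.differentiable (by norm_num)
  have Hdh : Differentiable ℝ (fderiv ℝ h) := hdh.differentiable (by norm_num)
  have Hg : Differentiable ℝ (gradient u) := hgc.differentiable (by norm_num)
  have Hdg : Differentiable ℝ (fderiv ℝ (gradient u)) := hdg.differentiable (by norm_num)
  have Hdu : Differentiable ℝ (fderiv ℝ u) := hdu.differentiable (by norm_num)
  -- inner product with gradient
  have hip : ∀ (f : E d → ℝ) (y v : E d), ⟪gradient f y, v⟫ = fderiv ℝ f y v := fun f y v =>
    InnerProductSpace.toDual_symm_apply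
  -- pointwise symmetry of the Hessian of u
  have hSg : ∀ (y v w : E d),
      ⟪fderiv ℝ (gradient u) y v, w⟫ = ⟪fderiv ℝ (gradient u) y w, v⟫ := by
    have key : ∀ (y v w : E d),
        ⟪fderiv ℝ (gradient u) y v, w⟫ = fderiv ℝ (fderiv ℝ u) y v w := by
      intro y v w
      have e1 : fderiv ℝ (fun z => ⟪gradient u z, w⟫) y v = ⟪fderiv ℝ (gradient u) y v, w⟫ := by
        rw [fderiv_inner_apply ℝ (Hg y) (differentiableAt_const w)]; simp
      have e2 : (fun z => ⟪gradient u z, w⟫) = fun z => fderiv ℝ u z w :=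
        funext fun z => hip u z w
      have e3 : fderiv ℝ (fun z => fderiv ℝ u z w) y v = fderiv ℝ (fderiv ℝ u) y v w :=
        fderiv_clm_apply_const (Hdu y) w v
      rw [← e1, e2, e3]
    intro y v w
    rw [key y v w, key y w v]
    exact (hu.contDiffAt.isSymmSndFDerivAt (by norm_num)) v w
  -- symmetry of second derivatives at x
  have hsymh : ∀ v w : E d, fderiv ℝ (fderiv ℝ h) x v w = fderiv ℝ (fderiv ℝ h) x w v :=
    hh.contDiffAt.isSymmSndFDerivAt (by norm_num)
  have hsymg2 : ∀ v w : E d,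
      fderiv ℝ (fderiv ℝ (gradient u)) x v w = fderiv ℝ (fderiv ℝ (gradient u)) x w v :=
    hgc.contDiffAt.isSymmSndFDerivAt (by norm_num)
  -- divergence of h as a sum, and its derivative
  have hvh : ∀ y, vdiv h y = ∑ j, ⟪fderiv ℝ h y (ee j), ee j⟫ := fun y =>
    trace_eq_sum (fderiv ℝ h y)
  have Hvh : DifferentiableAt ℝ (vdiv h) x := by
    rw [show vdiv h = fun y => ∑ j, ⟪fderiv ℝ h y (ee j), ee j⟫ from funext hvh]
    exact DifferentiableAt.fun_sum fun j _ =>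
      ((Hdh x).clm_apply (differentiableAt_const _)).inner ℝ (differentiableAt_const _)
  have hdvh : ∀ v : E d, fderiv ℝ (vdiv h) x v = ∑ j, ⟪fderiv ℝ (fderiv ℝ h) x v (ee j), ee j⟫ := by
    intro v
    rw [show vdiv h = fun y => ∑ j, ⟪fderiv ℝ h y (ee j), ee j⟫ from funext hvh]
    rw [fderiv_fun_sum fun j _ =>
      ((Hdh x).clm_apply (differentiableAt_const _)).inner ℝ (differentiableAt_const _)]
    rw [ContinuousLinearMap.sum_apply]
    exact Finset.sum_congr rfl fun j _ => fderiv_inner_clm_const (Hdh x) (ee j) (ee j) v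
  -- Laplacian of u as a sum
  have hlu : ∀ y, lap u y = ∑ i, ⟪fderiv ℝ (gradient u) y (ee i), ee i⟫ := fun y =>
    trace_eq_sum (fderiv ℝ (gradient u) y)
  -- derivative of the Laplacian of u vanishes at x
  have hlap0 : ∀ v : E d, fderiv ℝ (lap u) x v = 0 := by
    have hev : lap u =ᶠ[nhds x] (fun _ => (0 : ℝ)) := by
      filter_upwards [hΩ.mem_nhds hx] with y hy using harm y hy
    intro v; rw [hev.fderiv_eq]; simp
  have hz : ∀ v : E d, (∑ i, ⟪fderiv ℝ (fderiv ℝ (gradient u)) x v (ee i), ee i⟫) = 0 := by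
    intro v
    have hfl : fderiv ℝ (lap u) x v
        = ∑ i, ⟪fderiv ℝ (fderiv ℝ (gradient u)) x v (ee i), ee i⟫ := by
      rw [show lap u = fun y => ∑ i, ⟪fderiv ℝ (gradient u) y (ee i), ee i⟫ from funext hlu]
      rw [fderiv_fun_sum fun i _ =>
        ((Hdg x).clm_apply (differentiableAt_const _)).inner ℝ (differentiableAt_const _)]
      rw [ContinuousLinearMap.sum_apply]
      exact Finset.sum_congr rfl fun i _ => fderiv_inner_clm_const (Hdg x) (ee i) (ee i) v
    rw [← hfl, hlap0 v]
  -- the third-derivative term vanishes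
  have hz2 : (∑ i, ⟪h x, fderiv ℝ (fderiv ℝ (gradient u)) x (ee i) (ee i)⟫) = 0 := by
    have swap : ∀ i j : Fin d,
        ⟪fderiv ℝ (fderiv ℝ (gradient u)) x (ee i) (ee i), ee j⟫
          = ⟪fderiv ℝ (fderiv ℝ (gradient u)) x (ee j) (ee i), ee i⟫ := by
      intro i j
      have s1 := fderiv_inner_clm_const (Hdg x) (ee i) (ee j) (ee i)
      have s2 : (fun y => ⟪fderiv ℝ (gradient u) y (ee i), ee j⟫)
          = fun y => ⟪fderiv ℝ (gradient u) y (ee j), ee i⟫ :=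
        funext fun y => hSg y (ee i) (ee j)
      have s3 := fderiv_inner_clm_const (Hdg x) (ee j) (ee i) (ee i)
      rw [← s1, s2, s3, hsymg2 (ee i) (ee j)]
    calc (∑ i, ⟪h x, fderiv ℝ (fderiv ℝ (gradient u)) x (ee i) (ee i)⟫)
        = ∑ i, ∑ j, (h x) j * (fderiv ℝ (fderiv ℝ (gradient u)) x (ee i) (ee i)) j :=
          Finset.sum_congr rfl fun i _ => inner_coords _ _
      _ = ∑ j, (h x) j * ∑ i, (fderiv ℝ (fderiv ℝ (gradient u)) x (ee i) (ee i)) j := by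
          rw [Finset.sum_comm]
          exact Finset.sum_congr rfl fun j _ => (Finset.mul_sum _ _ _).symm
      _ = 0 := by
          refine Finset.sum_eq_zero fun j _ => ?_
          have hsum : (∑ i, (fderiv ℝ (fderiv ℝ (gradient u)) x (ee i) (ee i)) j) = 0 := by
            calc (∑ i, (fderiv ℝ (fderiv ℝ (gradient u)) x (ee i) (ee i)) j)
                = ∑ i, ⟪fderiv ℝ (fderiv ℝ (gradient u)) x (ee j) (ee i), ee i⟫ := by
                  refine Finset.sum_congr rfl fun i _ => ?_
                  rw [← inner_ee (fderiv ℝ (fderiv ℝ (gradient u)) x (ee i) (ee i)) j, swap i j]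
              _ = 0 := hz (ee j)
          rw [hsum, mul_zero]
  -- differentiability of the adjoint map
  have adjlin : IsLinearMap ℝ (fun A : E d →L[ℝ] E d => ContinuousLinearMap.adjoint A) :=
    ⟨fun a b => map_add _ a b, fun r a => by simp⟩
  have hadj : Differentiable ℝ (fun y => ContinuousLinearMap.adjoint (fderiv ℝ h y)) := by
    have h1 : Differentiable ℝ (fun A : E d →L[ℝ] E d => ContinuousLinearMap.adjoint A) :=
      (LinearMap.toContinuousLinearMap (IsLinearMap.mk' _ adjlin)).differentiable
    exact h1.comp Hdh
  have hAmat : ∀ y, Amat h y (gradient u y)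
      = fderiv ℝ h y (gradient u y)
        + ContinuousLinearMap.adjoint (fderiv ℝ h y) (gradient u y)
        - vdiv h y • gradient u y := by
    intro y
    simp [Amat, ContinuousLinearMap.sub_apply, ContinuousLinearMap.add_apply,
      ContinuousLinearMap.smul_apply]
  have HV : DifferentiableAt ℝ (fun y => Amat h y (gradient u y)) x := by
    rw [show (fun y => Amat h y (gradient u y))
        = fun y => fderiv ℝ h y (gradient u y)
          + ContinuousLinearMap.adjoint (fderiv ℝ h y) (gradient u y)
          - vdiv h y • gradient u y from funext hAmat]
    exact (((Hdh x).clm_apply (Hg x)).add ((hadj x).clm_apply (Hg x))).sub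
      (Hvh.smul (Hg x))
  have hVi : ∀ i : Fin d, (fun y => ⟪Amat h y (gradient u y), ee i⟫)
      = fun y => (⟪fderiv ℝ h y (gradient u y), ee i⟫ + ⟪gradient u y, fderiv ℝ h y (ee i)⟫)
          - vdiv h y * ⟪gradient u y, ee i⟫ := by
    intro i; funext y
    rw [hAmat y, inner_sub_left, inner_add_left, real_inner_smul_left,
      ContinuousLinearMap.adjoint_inner_left]
  have c1 : ∀ i : Fin d, fderiv ℝ (fun y => ⟪fderiv ℝ h y (gradient u y), ee i⟫) x (ee i)
      = ⟪fderiv ℝ h x (fderiv ℝ (gradient u) x (ee i)), ee i⟫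
        + ⟪fderiv ℝ (fderiv ℝ h) x (ee i) (gradient u x), ee i⟫ := by
    intro i
    rw [fderiv_inner_apply ℝ ((Hdh x).clm_apply (Hg x)) (differentiableAt_const _)]
    rw [fderiv_clm_apply (Hdh x) (Hg x)]
    simp [inner_add_left]
  have c2 : ∀ i : Fin d, fderiv ℝ (fun y => ⟪gradient u y, fderiv ℝ h y (ee i)⟫) x (ee i)
      = ⟪gradient u x, fderiv ℝ (fderiv ℝ h) x (ee i) (ee i)⟫
        + ⟪fderiv ℝ (gradient u) x (ee i), fderiv ℝ h x (ee i)⟫ := by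
    intro i
    rw [fderiv_inner_apply ℝ (Hg x) ((Hdh x).clm_apply (differentiableAt_const _))]
    rw [fderiv_clm_apply_const (Hdh x)]
  have c3 : ∀ i : Fin d, fderiv ℝ (fun y => vdiv h y * ⟪gradient u y, ee i⟫) x (ee i)
      = vdiv h x * ⟪fderiv ℝ (gradient u) x (ee i), ee i⟫
        + ⟪gradient u x, ee i⟫ * ∑ j, ⟪fderiv ℝ (fderiv ℝ h) x (ee i) (ee j), ee j⟫ := by
    intro i
    rw [fderiv_fun_mul Hvh ((Hg x).inner ℝ (differentiableAt_const _))]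
    rw [ContinuousLinearMap.add_apply, ContinuousLinearMap.smul_apply,
      ContinuousLinearMap.smul_apply, smul_eq_mul, smul_eq_mul]
    rw [hdvh (ee i)]
    rw [fderiv_inner_apply ℝ (Hg x) (differentiableAt_const _)]
    simp
  have LHS : vdiv (fun y => Amat h y (gradient u y)) x
      = ∑ i, ((⟪fderiv ℝ h x (fderiv ℝ (gradient u) x (ee i)), ee i⟫
          + ⟪fderiv ℝ (fderiv ℝ h) x (ee i) (gradient u x), ee i⟫
          + (⟪gradient u x, fderiv ℝ (fderiv ℝ h) x (ee i) (ee i)⟫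
            + ⟪fderiv ℝ (gradient u) x (ee i), fderiv ℝ h x (ee i)⟫))
          - (vdiv h x * ⟪fderiv ℝ (gradient u) x (ee i), ee i⟫
            + ⟪gradient u x, ee i⟫ * ∑ j, ⟪fderiv ℝ (fderiv ℝ h) x (ee i) (ee j), ee j⟫)) := by
    rw [vdiv_eq_sum _ x HV]
    refine Finset.sum_congr rfl fun i _ => ?_
    have hd1 : DifferentiableAt ℝ (fun y => ⟪fderiv ℝ h y (gradient u y), ee i⟫) x :=
      ((Hdh x).clm_apply (Hg x)).inner ℝ (differentiableAt_const _)
    have hd2 : DifferentiableAt ℝ (fun y => ⟪gradient u y, fderiv ℝ h y (ee i)⟫) x :=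
      (Hg x).inner ℝ ((Hdh x).clm_apply (differentiableAt_const _))
    have hd3 : DifferentiableAt ℝ (fun y => vdiv h y * ⟪gradient u y, ee i⟫) x :=
      Hvh.mul ((Hg x).inner ℝ (differentiableAt_const _))
    calc fderiv ℝ (fun y => ⟪(fun y => Amat h y (gradient u y)) y, ee i⟫) x (ee i)
        = fderiv ℝ (fun y => (⟪fderiv ℝ h y (gradient u y), ee i⟫
              + ⟪gradient u y, fderiv ℝ h y (ee i)⟫)
              - vdiv h y * ⟪gradient u y, ee i⟫) x (ee i) := by
          rw [show (fun y => ⟪(fun y => Amat h y (gradient u y)) y, ee i⟫)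
              = (fun y => ⟪Amat h y (gradient u y), ee i⟫) from rfl, hVi i]
      _ = (fderiv ℝ (fun y => ⟪fderiv ℝ h y (gradient u y), ee i⟫) x (ee i)
            + fderiv ℝ (fun y => ⟪gradient u y, fderiv ℝ h y (ee i)⟫) x (ee i))
            - fderiv ℝ (fun y => vdiv h y * ⟪gradient u y, ee i⟫) x (ee i) := by
          rw [fderiv_fun_sub (hd1.fun_add hd2) hd3, fderiv_fun_add hd1 hd2]
          simp [ContinuousLinearMap.sub_apply, ContinuousLinearMap.add_apply]
      _ = _ := by rw [c1 i, c2 i, c3 i]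
  have hFc : ContDiff ℝ 2 (fun y => ⟪h y, gradient u y⟫) := hh.inner ℝ hgc
  have hgF : ContDiff ℝ 1 (gradient (fun y => ⟪h y, gradient u y⟫)) := by
    exact ((InnerProductSpace.toDual ℝ (E d)).symm.contDiff).comp
      (hFc.fderiv_right (by norm_num))
  have RHSsum : lap (fun y => ⟪h y, gradient u y⟫) x
      = ∑ i, fderiv ℝ
          (fun y => ⟪gradient (fun z => ⟪h z, gradient u z⟫) y, ee i⟫) x (ee i) :=
    vdiv_eq_sum _ x (hgF.differentiable (by norm_num) x)
  have hgFi : ∀ i : Fin d, (fun y => ⟪gradient (fun z => ⟪h z, gradient u z⟫) y, ee i⟫)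
      = fun y => ⟪h y, fderiv ℝ (gradient u) y (ee i)⟫ + ⟪fderiv ℝ h y (ee i), gradient u y⟫ := by
    intro i; funext y
    rw [hip (fun z => ⟪h z, gradient u z⟫) y (ee i)]
    rw [fderiv_inner_apply ℝ (Hh y) (Hg y)]
  have r1 : ∀ i : Fin d, fderiv ℝ (fun y => ⟪h y, fderiv ℝ (gradient u) y (ee i)⟫) x (ee i)
      = ⟪h x, fderiv ℝ (fderiv ℝ (gradient u)) x (ee i) (ee i)⟫
        + ⟪fderiv ℝ h x (ee i), fderiv ℝ (gradient u) x (ee i)⟫ := by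
    intro i
    rw [fderiv_inner_apply ℝ (Hh x) ((Hdg x).clm_apply (differentiableAt_const _))]
    rw [fderiv_clm_apply_const (Hdg x)]
  have r2 : ∀ i : Fin d, fderiv ℝ (fun y => ⟪fderiv ℝ h y (ee i), gradient u y⟫) x (ee i)
      = ⟪fderiv ℝ h x (ee i), fderiv ℝ (gradient u) x (ee i)⟫
        + ⟪fderiv ℝ (fderiv ℝ h) x (ee i) (ee i), gradient u x⟫ := by
    intro i
    rw [fderiv_inner_apply ℝ ((Hdh x).clm_apply (differentiableAt_const _)) (Hg x)]
    rw [fderiv_clm_apply_const (Hdh x)]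
  have RHS : lap (fun y => ⟪h y, gradient u y⟫) x
      = ∑ i, (⟪h x, fderiv ℝ (fderiv ℝ (gradient u)) x (ee i) (ee i)⟫
          + 2 * ⟪fderiv ℝ h x (ee i), fderiv ℝ (gradient u) x (ee i)⟫
          + ⟪fderiv ℝ (fderiv ℝ h) x (ee i) (ee i), gradient u x⟫) := by
    rw [RHSsum]
    refine Finset.sum_congr rfl fun i _ => ?_
    have hd1 : DifferentiableAt ℝ (fun y => ⟪h y, fderiv ℝ (gradient u) y (ee i)⟫) x :=
      (Hh x).inner ℝ ((Hdg x).clm_apply (differentiableAt_const _))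
    have hd2 : DifferentiableAt ℝ (fun y => ⟪fderiv ℝ h y (ee i), gradient u y⟫) x :=
      ((Hdh x).clm_apply (differentiableAt_const _)).inner ℝ (Hg x)
    rw [hgFi i, fderiv_fun_add hd1 hd2, ContinuousLinearMap.add_apply, r1 i, r2 i]
    ring
  -- the remaining algebraic identities
  have idT6 : (∑ i, vdiv h x * ⟪fderiv ℝ (gradient u) x (ee i), ee i⟫) = 0 := by
    rw [← Finset.mul_sum, ← hlu x, harm x hx, mul_zero]
  have idA : (∑ i, ⟪fderiv ℝ (fderiv ℝ h) x (ee i) (gradient u x), ee i⟫)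
      = ∑ i, ⟪gradient u x, ee i⟫ * ∑ j, ⟪fderiv ℝ (fderiv ℝ h) x (ee i) (ee j), ee j⟫ := by
    have step : ∀ i : Fin d, ⟪fderiv ℝ (fderiv ℝ h) x (ee i) (gradient u x), ee i⟫
        = ∑ j, (gradient u x) j * ⟪fderiv ℝ (fderiv ℝ h) x (ee j) (ee i), ee i⟫ := by
      intro i
      conv_lhs => rw [expand_vec (gradient u x)]
      rw [map_sum, sum_inner]
      refine Finset.sum_congr rfl fun j _ => ?_
      rw [map_smul, real_inner_smul_left, hsymh (ee i) (ee j)]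
    calc (∑ i, ⟪fderiv ℝ (fderiv ℝ h) x (ee i) (gradient u x), ee i⟫)
        = ∑ i, ∑ j, (gradient u x) j * ⟪fderiv ℝ (fderiv ℝ h) x (ee j) (ee i), ee i⟫ :=
          Finset.sum_congr rfl fun i _ => step i
      _ = ∑ j, ∑ i, (gradient u x) j * ⟪fderiv ℝ (fderiv ℝ h) x (ee j) (ee i), ee i⟫ :=
          Finset.sum_comm
      _ = ∑ j, ⟪gradient u x, ee j⟫ * ∑ i, ⟪fderiv ℝ (fderiv ℝ h) x (ee j) (ee i), ee i⟫ := by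
          refine Finset.sum_congr rfl fun j _ => ?_
          rw [inner_ee, Finset.mul_sum]
  have idB : (∑ i, ⟪fderiv ℝ h x (fderiv ℝ (gradient u) x (ee i)), ee i⟫)
      = ∑ i, ⟪fderiv ℝ h x (ee i), fderiv ℝ (gradient u) x (ee i)⟫ := by
    have step : ∀ i : Fin d, ⟪fderiv ℝ h x (fderiv ℝ (gradient u) x (ee i)), ee i⟫
        = ∑ j, (fderiv ℝ (gradient u) x (ee j)) i * (fderiv ℝ h x (ee j)) i := by
      intro i
      conv_lhs => rw [expand_vec (fderiv ℝ (gradient u) x (ee i))]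
      rw [map_sum, sum_inner]
      refine Finset.sum_congr rfl fun j _ => ?_
      rw [map_smul, real_inner_smul_left, inner_ee]
      rw [show (fderiv ℝ (gradient u) x (ee i)) j = (fderiv ℝ (gradient u) x (ee j)) i from by
        rw [← inner_ee (fderiv ℝ (gradient u) x (ee i)) j,
          ← inner_ee (fderiv ℝ (gradient u) x (ee j)) i, hSg x (ee i) (ee j)]]
    calc (∑ i, ⟪fderiv ℝ h x (fderiv ℝ (gradient u) x (ee i)), ee i⟫)
        = ∑ i, ∑ j, (fderiv ℝ (gradient u) x (ee j)) i * (fderiv ℝ h x (ee j)) i :=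
          Finset.sum_congr rfl fun i _ => step i
      _ = ∑ j, ∑ i, (fderiv ℝ (gradient u) x (ee j)) i * (fderiv ℝ h x (ee j)) i :=
          Finset.sum_comm
      _ = ∑ j, ⟪fderiv ℝ (gradient u) x (ee j), fderiv ℝ h x (ee j)⟫ :=
          Finset.sum_congr rfl fun j _ => (inner_coords _ _).symm
      _ = ∑ j, ⟪fderiv ℝ h x (ee j), fderiv ℝ (gradient u) x (ee j)⟫ :=
          Finset.sum_congr rfl fun j _ => real_inner_comm _ _
  rw [LHS, RHS]
  simp only [Finset.sum_add_distrib, Finset.sum_sub_distrib]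
  rw [idB, idA, hz2, idT6]
  rw [show (∑ i, ⟪gradient u x, fderiv ℝ (fderiv ℝ h) x (ee i) (ee i)⟫)
      = ∑ i, ⟪fderiv ℝ (fderiv ℝ h) x (ee i) (ee i), gradient u x⟫ from
    Finset.sum_congr rfl fun i _ => real_inner_comm _ _]
  rw [show (∑ i, ⟪fderiv ℝ (gradient u) x (ee i), fderiv ℝ h x (ee i)⟫)
      = ∑ i, ⟪fderiv ℝ h x (ee i), fderiv ℝ (gradient u) x (ee i)⟫ from
    Finset.sum_congr rfl fun i _ => real_inner_comm _ _]
  rw [show (∑ i, 2 * ⟪fderiv ℝ h x (ee i), fderiv ℝ (gradient u) x (ee i)⟫)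
      = 2 * ∑ i, ⟪fderiv ℝ h x (ee i), fderiv ℝ (gradient u) x (ee i)⟫ from
    (Finset.mul_sum _ _ _).symm]
  ring
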